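/- arXiv:2505.08425 — 3 statements merged into one kernel-verified Lean document; each statement's English description precedes it below -/
import Mathlib

section
/- (Real supply is maximal monotone.) Define the real supply correspondence S̃ : ℝ ⇉ [0,∞) by S̃(ρ) = [Smin(ρ), Smax(ρ)] where Smin(ρ) = ∫_Ω v̄(x)·1{ρ̲(x) < ρ} dΠ(x) and Smax(ρ) = ∫_Ω v̄(x)·1{ρ̲(x) ≤ ρ} dΠ(x). Then: (1) for every ρ ∈ ℝ, Smin(ρ) ≤ Smax(ρ), so S̃(ρ) is a nonempty closed compact interval contained in [0,∞); (2) for every ρ ∈ ℝ, lim_{ρ'→ρ⁺} Smin(ρ') = Smax(ρ); (3) for every ρ ∈ ℝ, lim_{ρ'→ρ⁻} Smax(ρ') = Smin(ρ); moreover lim_{ρ→−∞} Smax(ρ) = 0 and lim_{ρ→+∞} Smin(ρ) = ∫_Ω v̄ dΠ, which is a positive real number (the supremum supply S_max). -/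
open MeasureTheory Filter Set

/-- **Real supply is maximal monotone.** Given a probability space `(Ω, P)`, an integrable
positive willing-to-contract supply volume `vbar`, and a measurable lowest supply price
willing to take `ρlow`, the real supply correspondence `S̃(ρ) = [Smin ρ, Smax ρ]` is a
maximal monotone operator: each value is a nonempty closed compact interval in `[0,∞)`,
the right limit of `Smin` at `ρ` is `Smax ρ`, the left limit of `Smax` at `ρ` is `Smin ρ`,
`Smax → 0` at `-∞`, and `Smin → ∫ vbar dP` (the supremum supply, a positive real) at `+∞`. -/
theorem real_supply_maximal_monotone
    {Ω : Type*} [MeasurableSpace Ω] (P : Measure Ω) [IsProbabilityMeasure P]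
    (vbar : Ω → ℝ) (hv_int : Integrable vbar P) (hv_pos : ∀ x, 0 < vbar x)
    (ρlow : Ω → ℝ) (hρ : Measurable ρlow)
    (Smin Smax : ℝ → ℝ)
    (hSmin : ∀ ρ, Smin ρ = ∫ x, (if ρlow x < ρ then vbar x else 0) ∂P)
    (hSmax : ∀ ρ, Smax ρ = ∫ x, (if ρlow x ≤ ρ then vbar x else 0) ∂P) :
    (∀ ρ, 0 ≤ Smin ρ ∧ Smin ρ ≤ Smax ρ) ∧
    (∀ ρ, Tendsto Smin (nhdsWithin ρ (Ioi ρ)) (nhds (Smax ρ))) ∧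
    (∀ ρ, Tendsto Smax (nhdsWithin ρ (Iio ρ)) (nhds (Smin ρ))) ∧
    Tendsto Smax atBot (nhds 0) ∧
    Tendsto Smin atTop (nhds (∫ x, vbar x ∂P)) ∧
    0 < ∫ x, vbar x ∂P := by
  classical
  have hintmin : ∀ ρ, Integrable (fun x => if ρlow x < ρ then vbar x else 0) P := by
    intro ρ
    have h : (fun x => if ρlow x < ρ then vbar x else 0)
        = Set.indicator {x | ρlow x < ρ} vbar := by
      ext x; simp [Set.indicator_apply, Set.mem_setOf_eq]
    rw [h]
    exact hv_int.indicator (measurableSet_lt hρ measurable_const)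
  have hintmax : ∀ ρ, Integrable (fun x => if ρlow x ≤ ρ then vbar x else 0) P := by
    intro ρ
    have h : (fun x => if ρlow x ≤ ρ then vbar x else 0)
        = Set.indicator {x | ρlow x ≤ ρ} vbar := by
      ext x; simp [Set.indicator_apply, Set.mem_setOf_eq]
    rw [h]
    exact hv_int.indicator (measurableSet_le hρ measurable_const)
  have hbound_min : ∀ ρ x, |if ρlow x < ρ then vbar x else 0| ≤ vbar x := by
    intro ρ x
    by_cases h : ρlow x < ρ <;> simp [h, abs_of_nonneg (hv_pos x).le, (hv_pos x).le]
  have hbound_max : ∀ ρ x, |if ρlow x ≤ ρ then vbar x else 0| ≤ vbar x := by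
    intro ρ x
    by_cases h : ρlow x ≤ ρ <;> simp [h, abs_of_nonneg (hv_pos x).le, (hv_pos x).le]
  refine ⟨?_, ?_, ?_, ?_, ?_, ?_⟩
  · intro ρ
    constructor
    · rw [hSmin]
      refine integral_nonneg fun x => ?_
      by_cases h : ρlow x < ρ <;> simp [h, (hv_pos x).le]
    · rw [hSmin, hSmax]
      refine integral_mono (hintmin ρ) (hintmax ρ) fun x => ?_
      by_cases h : ρlow x < ρ
      · simp [h, h.le]
      · by_cases h' : ρlow x ≤ ρ <;> simp [h, h', (hv_pos x).le]
  · intro ρ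
    rw [hSmax ρ]
    have := tendsto_integral_filter_of_dominated_convergence (μ := P)
      (F := fun ρ' x => if ρlow x < ρ' then vbar x else 0)
      (f := fun x => if ρlow x ≤ ρ then vbar x else 0)
      (l := nhdsWithin ρ (Ioi ρ)) vbar
      (Eventually.of_forall fun ρ' => (hintmin ρ').aestronglyMeasurable)
      (Eventually.of_forall fun ρ' => Eventually.of_forall fun x => hbound_min ρ' x)
      hv_int
      (Eventually.of_forall fun x => ?_)
    · exact this.congr fun ρ' => (hSmin ρ').symm
    · by_cases h : ρlow x ≤ ρ
      · have hev : ∀ᶠ ρ' in nhdsWithin ρ (Ioi ρ),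
            (if ρlow x < ρ' then vbar x else 0) = vbar x := by
          filter_upwards [self_mem_nhdsWithin] with ρ' hρ'
          simp [lt_of_le_of_lt h hρ']
        simp only [h, if_pos]
        exact tendsto_const_nhds.congr' (hev.mono fun _ h => h.symm)
      · push_neg at h
        have hev : ∀ᶠ ρ' in nhdsWithin ρ (Ioi ρ),
            (if ρlow x < ρ' then vbar x else 0) = 0 := by
          filter_upwards [nhdsWithin_le_nhds (eventually_lt_nhds h)] with ρ' hρ'
          simp [not_lt.mpr hρ'.le]
        simp only [not_le.mpr h, if_neg, not_le]
        exact tendsto_const_nhds.congr' (hev.mono fun _ h => h.symm)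
  · intro ρ
    rw [hSmin ρ]
    have := tendsto_integral_filter_of_dominated_convergence (μ := P)
      (F := fun ρ' x => if ρlow x ≤ ρ' then vbar x else 0)
      (f := fun x => if ρlow x < ρ then vbar x else 0)
      (l := nhdsWithin ρ (Iio ρ)) vbar
      (Eventually.of_forall fun ρ' => (hintmax ρ').aestronglyMeasurable)
      (Eventually.of_forall fun ρ' => Eventually.of_forall fun x => hbound_max ρ' x)
      hv_int
      (Eventually.of_forall fun x => ?_)
    · exact this.congr fun ρ' => (hSmax ρ').symm
    · by_cases h : ρlow x < ρ
      · have hev : ∀ᶠ ρ' in nhdsWithin ρ (Iio ρ),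
            (if ρlow x ≤ ρ' then vbar x else 0) = vbar x := by
          filter_upwards [nhdsWithin_le_nhds (eventually_gt_nhds h)] with ρ' hρ'
          simp [hρ'.le]
        simp only [h, if_pos]
        exact tendsto_const_nhds.congr' (hev.mono fun _ h => h.symm)
      · have hev : ∀ᶠ ρ' in nhdsWithin ρ (Iio ρ),
            (if ρlow x ≤ ρ' then vbar x else 0) = 0 := by
          filter_upwards [self_mem_nhdsWithin] with ρ' hρ'
          have : ¬ ρlow x ≤ ρ' := by
            push_neg at h ⊢
            exact lt_of_lt_of_le hρ' h
          simp [this]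
        simp only [h, if_neg, not_false_iff]
        exact tendsto_const_nhds.congr' (hev.mono fun _ h => h.symm)
  · have h0 : (0 : ℝ) = ∫ x, (0 : ℝ) ∂P := by simp
    rw [h0]
    have := tendsto_integral_filter_of_dominated_convergence (μ := P)
      (F := fun ρ' x => if ρlow x ≤ ρ' then vbar x else 0)
      (f := fun _ => (0 : ℝ)) (l := atBot) vbar
      (Eventually.of_forall fun ρ' => (hintmax ρ').aestronglyMeasurable)
      (Eventually.of_forall fun ρ' => Eventually.of_forall fun x => hbound_max ρ' x)
      hv_int
      (Eventually.of_forall fun x => ?_)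
    · exact this.congr fun ρ' => (hSmax ρ').symm
    · have hev : ∀ᶠ ρ' in (atBot : Filter ℝ),
          (if ρlow x ≤ ρ' then vbar x else 0) = 0 := by
        filter_upwards [eventually_lt_atBot (ρlow x)] with ρ' hρ'
        simp [not_le.mpr hρ']
      exact tendsto_const_nhds.congr' (hev.mono fun _ h => h.symm)
  · have := tendsto_integral_filter_of_dominated_convergence (μ := P)
      (F := fun ρ' x => if ρlow x < ρ' then vbar x else 0)
      (f := vbar) (l := atTop) vbar
      (Eventually.of_forall fun ρ' => (hintmin ρ').aestronglyMeasurable)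
      (Eventually.of_forall fun ρ' => Eventually.of_forall fun x => hbound_min ρ' x)
      hv_int
      (Eventually.of_forall fun x => ?_)
    · exact this.congr fun ρ' => (hSmin ρ').symm
    · have hev : ∀ᶠ ρ' in (atTop : Filter ℝ),
          (if ρlow x < ρ' then vbar x else 0) = vbar x := by
        filter_upwards [eventually_gt_atTop (ρlow x)] with ρ' hρ'
        simp [hρ']
      exact tendsto_const_nhds.congr' (hev.mono fun _ h => h.symm)
  · rw [integral_pos_iff_support_of_nonneg (fun x => (hv_pos x).le) hv_int]
    have hsupp : Function.support vbar = Set.univ := by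
      ext x; simp [Function.support, (hv_pos x).ne']
    simp [hsupp]
end

section
/- (Betrayal-free-collusion-free equilibria are Nash equilibria.) In any normal form game with a continuum of agents (𝒜, 𝒮, n, (U^(s))_{s∈𝒮}), every betrayal-free-collusion-free equilibrium strategy s ∈ 𝒮 is a Nash equilibrium strategy. -/
open MeasureTheory Set
open scoped Classical

/-- The collection of good Borel subsets of `[0,1)`: Borel sets that are either finite and
nonempty or have positive Lebesgue measure. -/
def goodBorel : Set (Set ℝ) :=
  {B | MeasurableSet B ∧ B ⊆ Set.Ico (0:ℝ) 1 ∧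
    ((B.Finite ∧ B.Nonempty) ∨ 0 < volume B)}

/-- The conditional uniform measure `I_G(A)`: for finite `G` it is `|A ∩ G| / |G|`; otherwise
it is `λ(A ∩ G) / λ(G)` where `λ` is Lebesgue measure. -/
noncomputable def condUniform (G A : Set ℝ) : ℝ :=
  if G.Finite then ((A ∩ G).ncard : ℝ) / (G.ncard : ℝ)
  else (volume (A ∩ G)).toReal / (volume G).toReal

/-- The admissible collusion deviated strategies set `𝒮^(f,G)`: admissible joint strategies
agreeing with `f` on `[0,1) ∖ G`. -/
def deviations {α : Type*} (S : Set (ℝ → α)) (f : ℝ → α) (G : Set ℝ) : Set (ℝ → α) :=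
  {s' ∈ S | ∀ x ∈ Set.Ico (0:ℝ) 1 \ G, s' x = f x}

/-- `s` is a Nash equilibrium strategy: no agent `y ∈ [0,1)` benefits (in the lexicographic
order on `ℝⁿ`) from unilaterally deviating to any admissible action `a ∈ 𝒜`. -/
def IsNashEq {d n : ℕ} (A : Set (Fin d → ℝ)) (S : Set (ℝ → Fin d → ℝ))
    (U : (ℝ → Fin d → ℝ) → ℝ → Fin n → ℝ) (s : ℝ → Fin d → ℝ) : Prop :=
  ∀ y ∈ Set.Ico (0:ℝ) 1, ∀ a ∈ A,
    toLex (U (Function.update s y a) y) ≤ toLex (U s y)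

/-- `s` is a collusion-free equilibrium strategy: for every good Borel coalition `G` and every
admissible collusion deviation `s'`, a positive `I_G`-fraction of the coalition is strictly
worse off under `s'` than under `s` (lexicographically). -/
def IsCollusionFreeEq {d n : ℕ} (A : Set (Fin d → ℝ)) (S : Set (ℝ → Fin d → ℝ))
    (U : (ℝ → Fin d → ℝ) → ℝ → Fin n → ℝ) (s : ℝ → Fin d → ℝ) : Prop :=
  ∀ G ∈ goodBorel, ∀ s' ∈ deviations S s G,
    0 < condUniform G {x ∈ G | toLex (U s' x) < toLex (U s x)}

/-- `s` is a betrayal-free-collusion-free equilibrium strategy: for every good Borel coalition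
`G` and every admissible collusion deviation `s'`, either a positive `I_G`-fraction of the
coalition is strictly worse off, or some subcoalition `G' ⊆ G` (with `G'` and `G ∖ G'` good
Borel) can betray via some `s'' ∈ 𝒮^(s',G')` making `I_{G'}`-almost every member of `G'`
strictly better off than under `s'` while a positive `I_{G∖G'}`-fraction of `G ∖ G'` is weakly
worse off than under `s`. -/
def IsBFCFEq {d n : ℕ} (A : Set (Fin d → ℝ)) (S : Set (ℝ → Fin d → ℝ))
    (U : (ℝ → Fin d → ℝ) → ℝ → Fin n → ℝ) (s : ℝ → Fin d → ℝ) : Prop :=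
  ∀ G ∈ goodBorel, ∀ s' ∈ deviations S s G,
    0 < condUniform G {x ∈ G | toLex (U s' x) < toLex (U s x)} ∨
    ∃ G' ⊆ G, G' ∈ goodBorel ∧ (G \ G') ∈ goodBorel ∧
      ∃ s'' ∈ deviations S s' G',
        condUniform G' {x ∈ G' | toLex (U s' x) < toLex (U s'' x)} = 1 ∧
        0 < condUniform (G \ G') {x ∈ G \ G' | toLex (U s'' x) ≤ toLex (U s x)}

/-- **Betrayal-free-collusion-free equilibria are Nash equilibria.** In any normal form game
with a continuum of agents `[0,1)` — action set `𝒜 ⊆ ℝ^d` nonempty, admissible joint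
strategies `𝒮` measurable, `𝒜`-valued on `[0,1)`, and closed under single-point updates, with
measurable lexicographic utilities `U^(s) : [0,1) → ℝⁿ` — every betrayal-free-collusion-free
equilibrium strategy is a Nash equilibrium strategy. -/
theorem bfcf_isNash {d n : ℕ}
    (A : Set (Fin d → ℝ)) (hA : A.Nonempty)
    (S : Set (ℝ → Fin d → ℝ))
    (hS_meas : ∀ s ∈ S, Measurable s)
    (hS_val : ∀ s ∈ S, ∀ x ∈ Set.Ico (0:ℝ) 1, s x ∈ A)
    (hS_upd : ∀ s ∈ S, ∀ y ∈ Set.Ico (0:ℝ) 1, ∀ a ∈ A, Function.update s y a ∈ S)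
    (U : (ℝ → Fin d → ℝ) → ℝ → Fin n → ℝ)
    (hU_meas : ∀ s ∈ S, Measurable (U s))
    (s : ℝ → Fin d → ℝ) (hs : s ∈ S)
    (hBFCF : IsBFCFEq A S U s) :
    IsNashEq A S U s := by
  intro y hy a ha
  by_contra hlt
  push_neg at hlt
  set s' := Function.update s y a with hs'def
  have hs'S : s' ∈ S := hS_upd s hs y hy a ha
  have hGgood : ({y} : Set ℝ) ∈ goodBorel :=
    ⟨measurableSet_singleton y, by simpa using hy,
      Or.inl ⟨Set.finite_singleton y, ⟨y, rfl⟩⟩⟩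
  have hdev : s' ∈ deviations S s {y} :=
    ⟨hs'S, fun x hx => Function.update_of_ne (by simpa using hx.2) a s⟩
  rcases hBFCF {y} hGgood s' hdev with h | ⟨G', hG'sub, hG'good, hGdiff, _⟩
  · have hempty : {x ∈ ({y}:Set ℝ) | toLex (U s' x) < toLex (U s x)} = ∅ := by
      ext x
      simp only [Set.mem_setOf_eq, Set.mem_singleton_iff, Set.mem_empty_iff_false, iff_false,
        not_and]
      rintro rfl h
      exact lt_asymm hlt h
    rw [hempty] at h
    simp [condUniform, Set.finite_singleton] at h
  · have hG'ne : G'.Nonempty := by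
      rcases hG'good.2.2 with ⟨_, hn⟩ | hv
      · exact hn
      · exfalso
        have hle : volume G' ≤ volume ({y} : Set ℝ) := measure_mono hG'sub
        rw [Real.volume_singleton] at hle
        simp [le_zero_iff.mp hle] at hv
    have hG'eq : G' = {y} := by
      rcases (Set.subset_singleton_iff_eq).mp hG'sub with h0 | h1
      · exact absurd h0 hG'ne.ne_empty
      · exact h1
    rw [hG'eq, Set.diff_self] at hGdiff
    rcases hGdiff.2.2 with ⟨_, hn⟩ | hv
    · exact hn.ne_empty rfl
    · simp at hv
end

section
/- (Supply Price Finding.) For ρ ∈ ℝ and q ∈ [0,1] with s := (1−q)·Smin(ρ) + q·Smax(ρ) > 0, define ĝ(ρ,q) = ( ((1−q)·p̲(ρ)·Smin(ρ) + q·p̄(ρ)·Smax(ρ))/s , s ). Then for every (p,s) ∈ ℝ × (0,∞) there is at most one ρ ∈ ℝ for which there exists q ∈ [0,1] with ĝ(ρ,q) = (p,s). Consequently, on the supply graph G = {ĝ(ρ,q) : ρ ∈ ℝ, q ∈ [0,1], (1−q)Smin(ρ)+qSmax(ρ) > 0} there is a well-defined supply price finding function ρ̂ : G → ℝ with (p,s)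 ∈ {ĝ(ρ̂(p,s), q) : q ∈ [0,1]} for every (p,s) ∈ G. -/
open Set Filter

/-- The supply plotting function: for supply price `ρ` and residual ratio `q`, with acquired
volume `s = (1-q)·Smin ρ + q·Smax ρ`, it returns the pair (per-unit supply cost, volume)
`( ((1-q)·p̲(ρ)·Smin(ρ) + q·p̄(ρ)·Smax(ρ)) / s , s )`. -/
noncomputable def supplyPlot (Smin Smax pl pb : ℝ → ℝ) (ρ q : ℝ) : ℝ × ℝ :=
  (((1 - q) * pl ρ * Smin ρ + q * pb ρ * Smax ρ) / ((1 - q) * Smin ρ + q * Smax ρ),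
    (1 - q) * Smin ρ + q * Smax ρ)

/-- The supply graph: points of the plane attained by the supply plotting function at some
supply price `ρ` and residual ratio `q ∈ [0,1]` with positive acquired supply volume. -/
noncomputable def supplyGraph (Smin Smax pl pb : ℝ → ℝ) : Set (ℝ × ℝ) :=
  {y | ∃ ρ : ℝ, ∃ q ∈ Set.Icc (0:ℝ) 1,
    0 < (1 - q) * Smin ρ + q * Smax ρ ∧ supplyPlot Smin Smax pl pb ρ q = y}

/-- **Supply Price Finding.** Let `Smin ≤ Smax` be non-decreasing bounded nonnegative
functions satisfying the maximal monotonicity relations (right limit of `Smin` is `Smax`,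
left limit of `Smax` is `Smin`), and let the supply cost functions `p̲, p̄` agree wherever
`Smin = Smax` and satisfy the Supply Monotone Trend. Then every point `(p,s)` with `s > 0`
is attained by the supply plotting function at at most one supply price `ρ`; consequently
there is a well-defined supply price finding function `ρ̂` on the supply graph, recovering for
each point some residual ratio `q ∈ [0,1]` plotting to it. -/
theorem supply_price_finding
    (Smin Smax : ℝ → ℝ)
    (hSmin_mono : Monotone Smin) (hSmax_mono : Monotone Smax)
    (hS_nonneg : ∀ ρ, 0 ≤ Smin ρ) (hS_le : ∀ ρ, Smin ρ ≤ Smax ρ)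
    (hS_bdd : ∃ C : ℝ, ∀ ρ, Smax ρ ≤ C)
    (hS_right : ∀ ρ, Tendsto Smin (nhdsWithin ρ (Set.Ioi ρ)) (nhds (Smax ρ)))
    (hS_left : ∀ ρ, Tendsto Smax (nhdsWithin ρ (Set.Iio ρ)) (nhds (Smin ρ)))
    (pl pb : ℝ → ℝ)
    (h_agree : ∀ ρ, Smin ρ = Smax ρ → pb ρ = pl ρ)
    (h_trend_max : ∀ ρ₁ ρ₂ : ℝ, ρ₂ < ρ₁ → Smax ρ₁ = Smax ρ₂ → 0 < Smax ρ₁ → pb ρ₂ < pb ρ₁)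
    (h_trend_min : ∀ ρ₁ ρ₂ : ℝ, ρ₂ < ρ₁ → Smin ρ₁ = Smin ρ₂ → 0 < Smin ρ₁ → pl ρ₂ < pl ρ₁) :
    (∀ p s : ℝ, 0 < s → ∀ ρ₁ ρ₂ : ℝ, ∀ q₁ ∈ Set.Icc (0:ℝ) 1, ∀ q₂ ∈ Set.Icc (0:ℝ) 1,
      supplyPlot Smin Smax pl pb ρ₁ q₁ = (p, s) →
      supplyPlot Smin Smax pl pb ρ₂ q₂ = (p, s) → ρ₁ = ρ₂) ∧
    ∃ ρhat : (supplyGraph Smin Smax pl pb) → ℝ,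
      ∀ x : (supplyGraph Smin Smax pl pb),
        ∃ q ∈ Set.Icc (0:ℝ) 1, supplyPlot Smin Smax pl pb (ρhat x) q = (x : ℝ × ℝ) := by

  -- For a < b we have Smax a ≤ Smin b, by the left-limit relation.
  have key2 : ∀ a b : ℝ, a < b → Smax a ≤ Smin b := by
    intro a b hab
    refine ge_of_tendsto (hS_left b) ?_
    filter_upwards [(eventually_gt_nhds hab).filter_mono nhdsWithin_le_nhds] with x hx
    exact hSmax_mono hx.le
  have key : ∀ p s : ℝ, 0 < s → ∀ ρ₁ ρ₂ : ℝ, ρ₂ < ρ₁ →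
      ∀ q₁ ∈ Set.Icc (0:ℝ) 1, ∀ q₂ ∈ Set.Icc (0:ℝ) 1,
      supplyPlot Smin Smax pl pb ρ₁ q₁ = (p, s) →
      supplyPlot Smin Smax pl pb ρ₂ q₂ = (p, s) → False := by
    intro p s hs ρ₁ ρ₂ hlt q₁ hq₁ q₂ hq₂ h1 h2
    obtain ⟨hq₁0, hq₁1⟩ := hq₁
    obtain ⟨hq₂0, hq₂1⟩ := hq₂
    simp only [supplyPlot, Prod.mk.injEq] at h1 h2
    obtain ⟨hp1, hs1⟩ := h1
    obtain ⟨hp2, hs2⟩ := h2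
    have hle : Smax ρ₂ ≤ Smin ρ₁ := key2 ρ₂ ρ₁ hlt
    have h2a : s ≤ Smax ρ₂ := by nlinarith [hS_le ρ₂]
    have h1a : Smin ρ₁ ≤ s := by nlinarith [hS_le ρ₁]
    have hSmin1 : Smin ρ₁ = s := le_antisymm h1a (by linarith)
    have hSmax2 : Smax ρ₂ = s := le_antisymm (by linarith) h2a
    -- p = pb ρ₂
    have hnum2 : (1 - q₂) * pl ρ₂ * Smin ρ₂ + q₂ * pb ρ₂ * Smax ρ₂ = pb ρ₂ * s := by
      rcases eq_or_lt_of_le hq₂1 with hq | hq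
      · rw [hq, hSmax2]; ring
      · have hmin2 : Smin ρ₂ = s := by
          have : (1 - q₂) * Smin ρ₂ = (1 - q₂) * s := by nlinarith
          have h1q : (0:ℝ) < 1 - q₂ := by linarith
          exact mul_left_cancel₀ (ne_of_gt h1q) this
        have hag := h_agree ρ₂ (by rw [hmin2, hSmax2])
        rw [hmin2, hSmax2, hag]; ring
    have hp2' : p = pb ρ₂ := by
      rw [← hp2, hs2, hnum2, mul_div_assoc, div_self (ne_of_gt hs), mul_one]
    -- p = pl ρ₁
    have hnum1 : (1 - q₁) * pl ρ₁ * Smin ρ₁ + q₁ * pb ρ₁ * Smax ρ₁ = pl ρ₁ * s := by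
      rcases eq_or_lt_of_le hq₁0 with hq | hq
      · rw [← hq, hSmin1]; ring
      · have hmax1 : Smax ρ₁ = s := by
          have : q₁ * Smax ρ₁ = q₁ * s := by nlinarith
          exact mul_left_cancel₀ (ne_of_gt hq) this
        have hag := h_agree ρ₁ (by rw [hmax1, hSmin1])
        rw [hmax1, hSmin1, hag]; ring
    have hp1' : p = pl ρ₁ := by
      rw [← hp1, hs1, hnum1, mul_div_assoc, div_self (ne_of_gt hs), mul_one]
    -- middle point
    set ρ := (ρ₂ + ρ₁) / 2 with hρ
    have hm2 : ρ₂ < ρ := by rw [hρ]; linarith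
    have hm1 : ρ < ρ₁ := by rw [hρ]; linarith
    have hminρ : Smin ρ = s := le_antisymm (hSmin1 ▸ hSmin_mono hm1.le)
      (by have := key2 ρ₂ ρ hm2; linarith)
    have hmaxρ : Smax ρ = s := le_antisymm (by have := key2 ρ ρ₁ hm1; linarith)
      (by have := hSmax_mono hm2.le; linarith)
    have h1 := h_trend_max ρ ρ₂ hm2 (by rw [hmaxρ, hSmax2]) (by rw [hmaxρ]; exact hs)
    have h2 := h_trend_min ρ₁ ρ hm1 (by rw [hSmin1, hminρ]) (by rw [hSmin1]; exact hs)
    have hag := h_agree ρ (by rw [hminρ, hmaxρ])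
    linarith
  constructor
  · intro p s hs ρ₁ ρ₂ q₁ hq₁ q₂ hq₂ h1 h2
    by_contra hne
    rcases lt_or_gt_of_ne hne with h | h
    · exact key p s hs ρ₂ ρ₁ h q₂ hq₂ q₁ hq₁ h2 h1
    · exact key p s hs ρ₁ ρ₂ h q₁ hq₁ q₂ hq₂ h1 h2
  · refine ⟨fun x => x.2.choose, fun x => ?_⟩
    obtain ⟨q, hq, _, hplot⟩ := x.2.choose_spec
    exact ⟨q, hq, hplot⟩
end
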